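/- arXiv:1905.11157 — 2 statements merged into one kernel-verified Lean document; each statement's English description precedes it below -/
import Mathlib

section
/- ResBurst is equivalent to LenBurst: for all σ, [b,e], K, B with K ≤ B−1, no subinterval of [b,e] satisfies RecoveryErr(B, HasBurstErr(A,K)) if and only if no subinterval of [b,e] of length ≤ B−1 satisfies HasBurstErr(A,K). -/
def BurstErr {PV : Type*} (σ : ℕ → Set PV) (A : PV) (k b e : ℕ) : Prop :=
  (∀ i, b ≤ i → i ≤ e → A ∉ σ i) ∧ k ≤ e - b

def HasBurstErr {PV : Type*} (σ : ℕ → Set PV) (A : PV) (k b e : ℕ) : Prop :=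
  ∃ b' e', b ≤ b' ∧ b' ≤ e' ∧ e' ≤ e ∧ BurstErr σ A k b' e'

def HasNoRecovery {PV : Type*} (σ : ℕ → Set PV) (A : PV) (B b e : ℕ) : Prop :=
  ∀ b' e', b ≤ b' → b' ≤ e' → e' ≤ e → (∀ i, b' ≤ i → i ≤ e' → A ∈ σ i) →
    e' - b' < B - 1

def RecoveryErr {PV : Type*} (σ : ℕ → Set PV) (A : PV) (B : ℕ)
    (Err : (ℕ → Set PV) → ℕ → ℕ → Prop) (b e : ℕ) : Prop :=
  Err σ b e ∧ HasNoRecovery σ A B b e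

theorem resBurst_iff_lenBurst {PV : Type*} (σ : ℕ → Set PV) (A : PV)
    (K B b e : ℕ) (hKB : K ≤ B - 1) :
    (¬ ∃ b' e', b ≤ b' ∧ b' ≤ e' ∧ e' ≤ e ∧
        RecoveryErr σ A B (fun ρ x y => HasBurstErr ρ A K x y) b' e') ↔
    (¬ ∃ b' e', b ≤ b' ∧ b' ≤ e' ∧ e' ≤ e ∧ e' - b' ≤ B - 1 ∧ HasBurstErr σ A K b' e') := by
  constructor
  · intro h hex
    apply h
    obtain ⟨b', e', hb, hbe, he, _hlen, u, v, hbu, huv, hve, hA, hK⟩ := hex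
    refine ⟨u, u + K, hb.trans hbu, Nat.le_add_right _ _, by omega, ?_, ?_⟩
    · exact ⟨u, u + K, le_rfl, Nat.le_add_right _ _, le_rfl,
        ⟨fun i hi hi2 => hA i hi (by omega), by omega⟩⟩
    · intro x y hux hxy hyk hAin
      exact absurd (hAin x le_rfl hxy) (hA x hux (by omega))
  · intro h hex
    apply h
    obtain ⟨b', e', hb, hbe, he, ⟨u, v, hbu, huv, hve, hA, hK⟩, _⟩ := hex
    exact ⟨u, u + K, hb.trans hbu, Nat.le_add_right _ _, by omega, by omega,
      u, u + K, le_rfl, Nat.le_add_right _ _, le_rfl,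
      ⟨fun i hi hi2 => hA i hi (by omega), by omega⟩⟩
end

section
/- The union of all non-blocking prefix-closed subsets of a prefix-closed language L is itself non-blocking and prefix-closed; hence if any supervisor realizing invariance of L exists, a unique maximally permissive supervisor for L exists. -/
def IsSupervisor {I O : Type*} (S : Set (List (Set I × Set O))) : Prop :=
  [] ∈ S ∧ (∀ w ∈ S, ∀ p, p <+: w → p ∈ S) ∧
    (∀ w ∈ S, ∀ i : Set I, ∃ o : Set O, w ++ [(i, o)] ∈ S)

/-- The union of all supervisors contained in a prefix-closed language `L` is itself
a supervisor contained in `L`, and contains every supervisor contained in `L`;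
hence it is the unique maximally permissive supervisor whenever any supervisor
realizing invariance of `L` exists. -/
theorem mps_exists {I O : Type*} (L : Set (List (Set I × Set O)))
    (hL0 : [] ∈ L) (hLpc : ∀ w ∈ L, ∀ p, p <+: w → p ∈ L)
    (hex : ∃ S, IsSupervisor S ∧ S ⊆ L) :
    IsSupervisor {w | ∃ S, IsSupervisor S ∧ S ⊆ L ∧ w ∈ S} ∧
    {w | ∃ S, IsSupervisor S ∧ S ⊆ L ∧ w ∈ S} ⊆ L ∧
    ∀ S, IsSupervisor S → S ⊆ L → S ⊆ {w | ∃ S', IsSupervisor S' ∧ S' ⊆ L ∧ w ∈ S'} := by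
  obtain ⟨S0, hS0, hS0L⟩ := hex
  refine ⟨⟨⟨S0, hS0, hS0L, hS0.1⟩, ?_, ?_⟩, ?_, ?_⟩
  · rintro w ⟨S, hS, hSL, hw⟩ p hp
    exact ⟨S, hS, hSL, hS.2.1 w hw p hp⟩
  · rintro w ⟨S, hS, hSL, hw⟩ i
    obtain ⟨o, ho⟩ := hS.2.2 w hw i
    exact ⟨o, S, hS, hSL, ho⟩
  · rintro w ⟨S, _, hSL, hw⟩
    exact hSL hw
  · intro S hS hSL w hw
    exact ⟨S, hS, hSL, hw⟩
end
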